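/- Suppose at least one presence-influencing set for X under θ exists. Then the intersection of all presence-influencing sets for X is itself a presence-influencing set for X, and it is contained in every presence-influencing set for X; in particular it is the unique minimal presence-influencing set for X. -/

import Mathlib

open Classical in
/-- θ̃_X(h): the sum of θ h x over labels x in X. -/
noncomputable def thetaSum {L : Type*} [Fintype L] (θ : List L → L → ℝ)
    (X : Set L) (h : List L) : ℝ :=
  ∑ x ∈ Finset.univ.filter (· ∈ X), θ h x

/-- The presence summary of history h w.r.t. label set U:
the set of labels of U occurring as entries of h. -/
def presenceSummary {L : Type*} (U : Set L) (h : List L) : Set L :=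
  {u | u ∈ U ∧ u ∈ h}

/-- U is a presence-influencing set for X under θ. -/
def PresenceInfluencing {L : Type*} [Fintype L] (θ : List L → L → ℝ)
    (X U : Set L) : Prop :=
  ∀ h h' : List L, presenceSummary U h = presenceSummary U h' →
    thetaSum θ X h = thetaSum θ X h'

lemma exists_list_of_set {L : Type*} [Fintype L] (S : Set L) :
    ∃ l : List L, ∀ a, a ∈ l ↔ a ∈ S := by
  refine ⟨(S.toFinite.toFinset).toList, fun a => ?_⟩
  rw [Finset.mem_toList, Set.Finite.mem_toFinset]

lemma pi_inter {L : Type*} [Fintype L] (θ : List L → L → ℝ) (X U V : Set L)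
    (hU : PresenceInfluencing θ X U) (hV : PresenceInfluencing θ X V) :
    PresenceInfluencing θ X (U ∩ V) := by
  intro h h' heq
  obtain ⟨l, hl⟩ := exists_list_of_set ((U ∩ {a | a ∈ h}) ∪ (V ∩ {a | a ∈ h'}))
  have hUeq : presenceSummary U h = presenceSummary U l := by
    ext a
    simp only [presenceSummary, Set.mem_setOf_eq, hl, Set.mem_union,
      Set.mem_inter_iff]
    constructor
    · rintro ⟨haU, hah⟩; exact ⟨haU, Or.inl ⟨haU, hah⟩⟩
    · rintro ⟨haU, hS⟩
      refine ⟨haU, ?_⟩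
      rcases hS with ⟨_, hah⟩ | ⟨haV, hah'⟩
      · exact hah
      · have : a ∈ presenceSummary (U ∩ V) h' := ⟨⟨haU, haV⟩, hah'⟩
        rw [← heq] at this
        exact this.2
  have hVeq : presenceSummary V l = presenceSummary V h' := by
    ext a
    simp only [presenceSummary, Set.mem_setOf_eq, hl, Set.mem_union,
      Set.mem_inter_iff]
    constructor
    · rintro ⟨haV, hS⟩
      refine ⟨haV, ?_⟩
      rcases hS with ⟨haU, hah⟩ | ⟨_, hah'⟩
      · have : a ∈ presenceSummary (U ∩ V) h := ⟨⟨haU, haV⟩, hah⟩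
        rw [heq] at this; exact this.2
      · exact hah'
    · rintro ⟨haV, hah'⟩; exact ⟨haV, Or.inr ⟨haV, hah'⟩⟩
  calc thetaSum θ X h = thetaSum θ X l := hU h l hUeq
    _ = thetaSum θ X h' := hV l h' hVeq

theorem sInter_presence_influencing {L : Type*} [Fintype L]
    (θ : List L → L → ℝ)
    (hnn : ∀ (h : List L) (x : L), 0 ≤ θ h x)
    (hsum : ∀ h : List L, ∑ x, θ h x = 1)
    (X : Set L)
    (hex : ∃ U : Set L, PresenceInfluencing θ X U) :
    PresenceInfluencing θ X (⋂₀ {V : Set L | PresenceInfluencing θ X V}) ∧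
    (∀ V : Set L, PresenceInfluencing θ X V →
      ⋂₀ {V : Set L | PresenceInfluencing θ X V} ⊆ V) ∧
    (∀ W : Set L, PresenceInfluencing θ X W →
      (∀ W' ⊂ W, ¬ PresenceInfluencing θ X W') →
      W = ⋂₀ {V : Set L | PresenceInfluencing θ X V}) := by
  obtain ⟨U, hU⟩ := hex
  obtain ⟨W, hW, hmin⟩ : ∃ a ∈ {V : Set L | PresenceInfluencing θ X V},
      ∀ a' ∈ {V : Set L | PresenceInfluencing θ X V}, id a' ≤ id a → id a = id a' := by
    obtain ⟨W, hW, hm⟩ := Set.Finite.exists_minimalFor id {V : Set L | PresenceInfluencing θ X V}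
      (Set.toFinite _) ⟨U, hU⟩
    exact ⟨W, hW, fun a' ha' hle => le_antisymm (hm ha' hle) hle⟩
  have hWsub : ∀ V : Set L, PresenceInfluencing θ X V → W ⊆ V := by
    intro V hV
    have h1 : PresenceInfluencing θ X (W ∩ V) := pi_inter θ X W V hW hV
    have h2 : (W ∩ V : Set L) ⊆ W := Set.inter_subset_left
    have := hmin (W ∩ V) h1 h2
    simp only [id] at this
    intro x hx
    exact (this ▸ hx : x ∈ W ∩ V).2
  have hM : ⋂₀ {V : Set L | PresenceInfluencing θ X V} = W := by
    apply subset_antisymm (Set.sInter_subset_of_mem hW)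
    intro x hx
    rw [Set.mem_sInter]
    exact fun V hV => hWsub V hV hx
  have hPI : PresenceInfluencing θ X (⋂₀ {V : Set L | PresenceInfluencing θ X V}) := by
    rw [hM]; exact hW
  refine ⟨hPI, fun V hV => ?_, fun W' hW' hmin' => ?_⟩
  · rw [hM]; exact hWsub V hV
  · by_contra hne
    have hsub : ⋂₀ {V : Set L | PresenceInfluencing θ X V} ⊆ W' := by
      rw [hM]; exact hWsub W' hW'
    exact hmin' _ ⟨hsub, fun h => hne (subset_antisymm h hsub)⟩ hPI
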